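/- arXiv:2009.10805 — 2 statements merged into one kernel-verified Lean document; each statement's English description precedes it below -/
import Mathlib

section
/- Let G be a Polish abelian group with the division closure property and let 𝐀 = (A_(ℓ), η_(ℓ+1,ℓ))_{ℓ∈ω} be an inductive sequence of cochain complexes of finitely generated free abelian groups, with G-dual tower 𝐀* = (A_(ℓ)*, η_(ℓ+1,ℓ)*). Then for each n ∈ ℤ the pairing defined by ⟨z, a e_ℓ⟩ = z_ℓ(a) for a ∈ A_(ℓ)^n and ⟨z, b e_{ℓ,ℓ+1}⟩ = z_{ℓ,ℓ+1}(b) for b ∈ A_(ℓ)^{n+1}, where z = (z_m, z_{m0,m1}) ∈ (holim 𝐀*)_n, gives a topological group isomorphism (holim 𝐀*)_n ≅ Hom((hocolim 𝐀)^n, G), and these isomorphisms intertwine the differentials of holim 𝐀* with the duals (precompositions) of the codifferentials of hocolim 𝐀; that is, holim(𝐀*) is isomorphic as a Polish chain complex to the G-dual (hocolim 𝐀)*. -/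
/-!
Statement 12: for an inductive sequence `𝐀` of cochain complexes of finitely generated
free abelian groups with `G`-dual tower `𝐀*`, the canonical pairing gives, in each
degree, a topological group isomorphism `(holim 𝐀*)_n ≅ Hom((hocolim 𝐀)^n, G)`, and
these isomorphisms intertwine the differentials of `holim 𝐀*` with the duals of the
codifferentials of `hocolim 𝐀`.

Encoding: `A ℓ n` is the degree-`n` group of `A_(ℓ)`, with codifferential `δ ℓ n` and
bonding maps `η ℓ n`; `(hocolim 𝐀)^n` is `hocolimGrp A n`, with codifferential
`hocolimD`.  An element of `(holim 𝐀*)_N` is a pair `(z, z2)` with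
`z ℓ : A ℓ N → G` and `z2 ℓ k : A ℓ (N+1) → G` (the component `z_{ℓ,ℓ+k}`), subject to
additivity and coherence; this is the subgroup `holimDualSub` of the product space,
whose differential is induced by the raw map `dHolimDual`.  `Hom((hocolim 𝐀)^n, G)`
is the subgroup `homSet` of additive functions, with the product topology.
-/

/-- `(-1)^n` for `n : ℤ`. -/
def sgn (n : ℤ) : ℤ := if Even n then 1 else -1

/-- Composite bonding maps `η_(ℓ+k, ℓ)` of an inductive sequence. -/
def etaComp {A : ℕ → ℤ → Type*} [∀ ℓ n, AddCommGroup (A ℓ n)]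
    (η : ∀ (ℓ : ℕ) (n : ℤ), A ℓ n →+ A (ℓ + 1) n) (n : ℤ) :
    ∀ ℓ k : ℕ, A ℓ n →+ A (ℓ + k) n
  | _, 0 => AddMonoidHom.id _
  | ℓ, (k + 1) => (η (ℓ + k) n).comp (etaComp η n ℓ k)

/-- The degree-`n` group of the homotopy colimit. -/
abbrev hocolimGrp (A : ℕ → ℤ → Type*) [∀ ℓ n, AddCommGroup (A ℓ n)] (n : ℤ) : Type _ :=
  (DirectSum ℕ fun m => A m (n + 1)) × (DirectSum ℕ fun k => A k n)

/-- The codifferential of the homotopy colimit. -/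
noncomputable def hocolimD (A : ℕ → ℤ → Type*) [∀ ℓ n, AddCommGroup (A ℓ n)]
    (δ : ∀ (ℓ : ℕ) (n : ℤ), A ℓ n →+ A ℓ (n + 1))
    (η : ∀ (ℓ : ℕ) (n : ℤ), A ℓ n →+ A (ℓ + 1) n) (n : ℤ) :
    hocolimGrp A n →+ hocolimGrp A (n + 1) :=
  ((DirectSum.toAddMonoid fun ℓ : ℕ =>
      (((DirectSum.of (fun m : ℕ => A m (n + 1 + 1)) ℓ).comp (δ ℓ (n + 1))).prod
        (sgn n • ((DirectSum.of (fun k : ℕ => A k (n + 1)) ℓ) -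
          (DirectSum.of (fun k : ℕ => A k (n + 1)) (ℓ + 1)).comp (η ℓ (n + 1)))))).comp
    (AddMonoidHom.fst _ _)) +
  ((DirectSum.toAddMonoid fun k : ℕ =>
      ((0 : A k n →+ DirectSum ℕ fun m => A m (n + 1 + 1)).prod
        ((DirectSum.of (fun k' : ℕ => A k' (n + 1)) k).comp (δ k n)))).comp
    (AddMonoidHom.snd _ _))

/-- The subgroup of additive functions in the product space `X → G`. -/
def homSet (X G : Type*) [AddCommGroup X] [AddCommGroup G] : AddSubgroup (X → G) where
  carrier := {f | ∀ x y : X, f (x + y) = f x + f y}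
  zero_mem' := fun _ _ => by simp
  add_mem' := by
    intro f g hf hg x y
    simp only [Pi.add_apply, hf x y, hg x y]
    abel
  neg_mem' := by
    intro f hf x y
    simp only [Pi.neg_apply, hf x y]
    abel

/-- The degree-`N` group of the homotopy limit of the `G`-dual tower `𝐀*`, as a subgroup
of a product space: pairs `(z, z2)` of additive components satisfying the coherence
condition `z_{ℓ,ℓ+k} + p^{(ℓ,ℓ+k)}(z_{ℓ+k,ℓ+k+l}) = z_{ℓ,ℓ+k+l}`, where the bonding maps
of the tower are the duals of the `η`'s. -/
def holimDualSub (A : ℕ → ℤ → Type*) [∀ ℓ n, AddCommGroup (A ℓ n)]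
    (η : ∀ (ℓ : ℕ) (n : ℤ), A ℓ n →+ A (ℓ + 1) n) (G : Type*) [AddCommGroup G] (N : ℤ) :
    AddSubgroup ((∀ ℓ : ℕ, A ℓ N → G) × (∀ (ℓ k : ℕ), A ℓ (N + 1) → G)) where
  carrier := {z |
    (∀ (ℓ : ℕ) (a b : A ℓ N), z.1 ℓ (a + b) = z.1 ℓ a + z.1 ℓ b) ∧
    (∀ (ℓ k : ℕ) (a b : A ℓ (N + 1)), z.2 ℓ k (a + b) = z.2 ℓ k a + z.2 ℓ k b) ∧
    ∀ (ℓ k l : ℕ) (a : A ℓ (N + 1)),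
      z.2 ℓ k a + z.2 (ℓ + k) l (etaComp η (N + 1) ℓ k a) = z.2 ℓ (k + l) a}
  zero_mem' := ⟨fun _ _ _ => by simp, fun _ _ _ _ => by simp, fun _ _ _ _ => by simp⟩
  add_mem' := by
    rintro z w ⟨z1, z2, z3⟩ ⟨w1, w2, w3⟩
    refine ⟨fun ℓ a b => ?_, fun ℓ k a b => ?_, fun ℓ k l a => ?_⟩
    · show z.1 ℓ (a + b) + w.1 ℓ (a + b) = _
      rw [z1, w1]; show _ = z.1 ℓ a + w.1 ℓ a + (z.1 ℓ b + w.1 ℓ b); abel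
    · show z.2 ℓ k (a + b) + w.2 ℓ k (a + b) = _
      rw [z2, w2]; show _ = z.2 ℓ k a + w.2 ℓ k a + (z.2 ℓ k b + w.2 ℓ k b); abel
    · show z.2 ℓ k a + w.2 ℓ k a +
          (z.2 (ℓ + k) l (etaComp η (N + 1) ℓ k a) +
            w.2 (ℓ + k) l (etaComp η (N + 1) ℓ k a)) =
          z.2 ℓ (k + l) a + w.2 ℓ (k + l) a
      calc z.2 ℓ k a + w.2 ℓ k a +
            (z.2 (ℓ + k) l (etaComp η (N + 1) ℓ k a) +
              w.2 (ℓ + k) l (etaComp η (N + 1) ℓ k a))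
          = (z.2 ℓ k a + z.2 (ℓ + k) l (etaComp η (N + 1) ℓ k a)) +
            (w.2 ℓ k a + w.2 (ℓ + k) l (etaComp η (N + 1) ℓ k a)) := by abel
        _ = z.2 ℓ (k + l) a + w.2 ℓ (k + l) a := by rw [z3, w3]
  neg_mem' := by
    rintro z ⟨z1, z2, z3⟩
    refine ⟨fun ℓ a b => ?_, fun ℓ k a b => ?_, fun ℓ k l a => ?_⟩
    · show -z.1 ℓ (a + b) = -z.1 ℓ a + -z.1 ℓ b
      rw [z1]; abel
    · show -z.2 ℓ k (a + b) = -z.2 ℓ k a + -z.2 ℓ k b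
      rw [z2]; abel
    · show -z.2 ℓ k a + -z.2 (ℓ + k) l (etaComp η (N + 1) ℓ k a) = -z.2 ℓ (k + l) a
      rw [← neg_add, z3]

/-- The raw differential of the homotopy limit of the dual tower (from degree `N+1`
to degree `N`). -/
def dHolimDual (A : ℕ → ℤ → Type*) [∀ ℓ n, AddCommGroup (A ℓ n)]
    (δ : ∀ (ℓ : ℕ) (n : ℤ), A ℓ n →+ A ℓ (n + 1))
    (η : ∀ (ℓ : ℕ) (n : ℤ), A ℓ n →+ A (ℓ + 1) n) (G : Type*) [AddCommGroup G] (N : ℤ)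
    (zz : (∀ ℓ : ℕ, A ℓ (N + 1) → G) × (∀ (ℓ k : ℕ), A ℓ (N + 1 + 1) → G)) :
    (∀ ℓ : ℕ, A ℓ N → G) × (∀ (ℓ k : ℕ), A ℓ (N + 1) → G) :=
  (fun ℓ a => zz.1 ℓ (δ ℓ N a),
   fun ℓ k a => zz.2 ℓ k (δ ℓ (N + 1) a) +
     sgn (N + 1) • (zz.1 (ℓ + k) (etaComp η (N + 1) ℓ k a) - zz.1 ℓ a))

set_option linter.unusedSectionVars false
set_option linter.unusedVariables false

/-! ### Auxiliary lemmas -/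

section Aux
variable {A : ℕ → ℤ → Type*} [∀ ℓ n, AddCommGroup (A ℓ n)]
  (η : ∀ (ℓ : ℕ) (n : ℤ), A ℓ n →+ A (ℓ + 1) n)

lemma sgn_succ' (n : ℤ) : sgn (n + 1) = - sgn n := by
  by_cases h : Even n <;> simp [sgn, Int.even_add_one, h]

lemma apply_heq' {n : ℤ} {G : Sort*} (g : ∀ m : ℕ, A m n → G) {m1 m2 : ℕ} (h : m1 = m2)
    {x1 : A m1 n} {x2 : A m2 n} (hx : HEq x1 x2) : g m1 x1 = g m2 x2 := by
  subst h; rw [eq_of_heq hx]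

lemma heq_congr_eta' {n : ℤ} {m1 m2 : ℕ} (h : m1 = m2) {x1 : A m1 n} {x2 : A m2 n}
    (hx : HEq x1 x2) : HEq (η m1 n x1) (η m2 n x2) := by
  subst h; rw [eq_of_heq hx]

lemma etaComp_assoc' (n : ℤ) (ℓ k : ℕ) (a : A ℓ n) :
    ∀ l : ℕ, HEq (etaComp η n (ℓ + k) l (etaComp η n ℓ k a)) (etaComp η n ℓ (k + l) a)
  | 0 => HEq.rfl
  | (l + 1) => heq_congr_eta' η (Nat.add_assoc ℓ k l) (etaComp_assoc' n ℓ k a l)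

lemma etaComp_delta' (δ : ∀ (ℓ : ℕ) (n : ℤ), A ℓ n →+ A ℓ (n + 1))
    (hηchain : ∀ (ℓ : ℕ) (n : ℤ) (x : A ℓ n),
      η ℓ (n + 1) (δ ℓ n x) = δ (ℓ + 1) n (η ℓ n x)) (n : ℤ) (ℓ : ℕ) :
    ∀ (k : ℕ) (a : A ℓ n),
      etaComp η (n + 1) ℓ k (δ ℓ n a) = δ (ℓ + k) n (etaComp η n ℓ k a)
  | 0, a => rfl
  | (k + 1), a => by
    show η (ℓ + k) (n + 1) (etaComp η (n + 1) ℓ k (δ ℓ n a))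
        = δ (ℓ + k + 1) n (η (ℓ + k) n (etaComp η n ℓ k a))
    rw [etaComp_delta' δ hηchain n ℓ k a, hηchain]

variable {G : Type*} [AddCommGroup G]

lemma z2_zero' {N : ℤ} {zz : (∀ ℓ : ℕ, A ℓ N → G) × (∀ (ℓ k : ℕ), A ℓ (N + 1) → G)}
    (hz : zz ∈ holimDualSub A η G N) (ℓ : ℕ) (b : A ℓ (N + 1)) :
    zz.2 ℓ 0 b = 0 := by
  have h2 : zz.2 ℓ 0 b + zz.2 ℓ 0 b = zz.2 ℓ 0 b := hz.2.2 ℓ 0 0 b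
  exact add_eq_right.mp h2

/-- The pairing as an additive homomorphism. -/
noncomputable def pairF (N : ℤ) (zz : ↥(holimDualSub A η G N)) : hocolimGrp A N →+ G :=
  ((DirectSum.toAddMonoid fun ℓ : ℕ =>
      AddMonoidHom.mk' (zz.1.2 ℓ 1) (zz.2.2.1 ℓ 1)).comp (AddMonoidHom.fst _ _)) +
  ((DirectSum.toAddMonoid fun k : ℕ =>
      AddMonoidHom.mk' (zz.1.1 k) (zz.2.1 k)).comp (AddMonoidHom.snd _ _))

lemma pairF_of1 (N : ℤ) (zz : ↥(holimDualSub A η G N)) (ℓ : ℕ) (b : A ℓ (N + 1)) :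
    pairF η N zz (DirectSum.of (fun m : ℕ => A m (N + 1)) ℓ b, 0) = zz.1.2 ℓ 1 b := by
  simp [pairF]

lemma pairF_of2 (N : ℤ) (zz : ↥(holimDualSub A η G N)) (k : ℕ) (a : A k N) :
    pairF η N zz (0, DirectSum.of (fun k' : ℕ => A k' N) k a) = zz.1.1 k a := by
  simp [pairF]

lemma pairF_apply (N : ℤ) (zz : ↥(holimDualSub A η G N))
    (x : hocolimGrp A N)
    [∀ (i : ℕ) (y : A i (N + 1)), Decidable (y ≠ 0)]
    [∀ (i : ℕ) (y : A i N), Decidable (y ≠ 0)] :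
    pairF η N zz x = (∑ i ∈ DFinsupp.support x.1, zz.1.2 i 1 (x.1 i)) +
      ∑ i ∈ DFinsupp.support x.2, zz.1.1 i (x.2 i) := by
  simp only [pairF, AddMonoidHom.add_apply, AddMonoidHom.coe_comp, Function.comp_apply,
    AddMonoidHom.coe_fst, AddMonoidHom.coe_snd, DirectSum.toAddMonoid,
    DFinsupp.liftAddHom_apply]
  erw [DFinsupp.sumAddHom_apply, DFinsupp.sumAddHom_apply]
  rfl


/-- Raw inverse of the pairing. -/
noncomputable def invRaw (N : ℤ) (f : hocolimGrp A N → G) :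
    (∀ ℓ : ℕ, A ℓ N → G) × (∀ (ℓ k : ℕ), A ℓ (N + 1) → G) :=
  (fun k a => f (0, DirectSum.of (fun k' : ℕ => A k' N) k a),
   fun ℓ k b => ∑ j ∈ Finset.range k,
     f (DirectSum.of (fun m : ℕ => A m (N + 1)) (ℓ + j) (etaComp η (N + 1) ℓ j b), 0))

lemma invRaw_mem (N : ℤ) (f : hocolimGrp A N → G)
    (hf : f ∈ homSet (hocolimGrp A N) G) :
    invRaw η N f ∈ holimDualSub A η G N := by
  refine ⟨fun ℓ a b => ?_, fun ℓ k a b => ?_, fun ℓ k l a => ?_⟩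
  · show f (0, DirectSum.of (fun k' : ℕ => A k' N) ℓ (a + b)) = _
    rw [map_add (DirectSum.of (fun k' : ℕ => A k' N) ℓ)]
    have h := hf (0, DirectSum.of (fun k' : ℕ => A k' N) ℓ a)
      (0, DirectSum.of (fun k' : ℕ => A k' N) ℓ b)
    simpa [invRaw] using h
  · show (∑ j ∈ Finset.range k, f (DirectSum.of (fun m : ℕ => A m (N + 1)) (ℓ + j)
        (etaComp η (N + 1) ℓ j (a + b)), 0)) = _
    have hsplit : (invRaw η N f).2 ℓ k a + (invRaw η N f).2 ℓ k b
        = ∑ j ∈ Finset.range k,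
          (f (DirectSum.of (fun m : ℕ => A m (N + 1)) (ℓ + j) (etaComp η (N + 1) ℓ j a), 0) +
           f (DirectSum.of (fun m : ℕ => A m (N + 1)) (ℓ + j) (etaComp η (N + 1) ℓ j b), 0)) := by
      show (∑ j ∈ Finset.range k,
          f (DirectSum.of (fun m : ℕ => A m (N + 1)) (ℓ + j) (etaComp η (N + 1) ℓ j a), 0)) +
        (∑ j ∈ Finset.range k,
          f (DirectSum.of (fun m : ℕ => A m (N + 1)) (ℓ + j) (etaComp η (N + 1) ℓ j b), 0)) = _
      exact (Finset.sum_add_distrib).symm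
    rw [hsplit]
    refine Finset.sum_congr rfl fun j _ => ?_
    rw [map_add, map_add]
    have h := hf (DirectSum.of (fun m : ℕ => A m (N + 1)) (ℓ + j) (etaComp η (N + 1) ℓ j a), 0)
      (DirectSum.of (fun m : ℕ => A m (N + 1)) (ℓ + j) (etaComp η (N + 1) ℓ j b), 0)
    simpa using h
  · induction l with
    | zero => simp [invRaw]
    | succ l ih =>
      show (invRaw η N f).2 ℓ k a + ∑ j ∈ Finset.range (l + 1),
          f (DirectSum.of (fun m : ℕ => A m (N + 1)) (ℓ + k + j)
            (etaComp η (N + 1) (ℓ + k) j (etaComp η (N + 1) ℓ k a)), 0)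
          = ∑ j ∈ Finset.range (k + (l + 1)),
            f (DirectSum.of (fun m : ℕ => A m (N + 1)) (ℓ + j) (etaComp η (N + 1) ℓ j a), 0)
      rw [Finset.sum_range_succ, ← Nat.add_assoc k l 1, Finset.sum_range_succ]
      have hterm : f (DirectSum.of (fun m : ℕ => A m (N + 1)) (ℓ + k + l)
            (etaComp η (N + 1) (ℓ + k) l (etaComp η (N + 1) ℓ k a)), 0)
          = f (DirectSum.of (fun m : ℕ => A m (N + 1)) (ℓ + (k + l))
            (etaComp η (N + 1) ℓ (k + l) a), 0) :=
        apply_heq' (fun m x => f (DirectSum.of (fun m' : ℕ => A m' (N + 1)) m x, 0))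
          (Nat.add_assoc ℓ k l) (etaComp_assoc' η (N + 1) ℓ k a l)
      rw [hterm, ← add_assoc]
      have ih' : (invRaw η N f).2 ℓ k a + ∑ x ∈ Finset.range l,
          f (DirectSum.of (fun m : ℕ => A m (N + 1)) (ℓ + k + x)
            (etaComp η (N + 1) (ℓ + k) x (etaComp η (N + 1) ℓ k a)), 0)
          = ∑ x ∈ Finset.range (k + l),
            f (DirectSum.of (fun m : ℕ => A m (N + 1)) (ℓ + x) (etaComp η (N + 1) ℓ x a), 0) := ih
      rw [ih']

lemma invRaw_pairF (N : ℤ) (zz : ↥(holimDualSub A η G N)) :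
    invRaw η N (⇑(pairF η N zz)) = zz.1 := by
  refine Prod.ext (funext fun k => funext fun a => pairF_of2 η N zz k a) ?_
  funext ℓ k b
  show (∑ j ∈ Finset.range k, pairF η N zz
      (DirectSum.of (fun m : ℕ => A m (N + 1)) (ℓ + j) (etaComp η (N + 1) ℓ j b), 0))
      = zz.1.2 ℓ k b
  induction k with
  | zero => simpa using (z2_zero' η zz.2 ℓ b).symm
  | succ k ih =>
    rw [Finset.sum_range_succ, ih, pairF_of1]
    exact zz.2.2.2 ℓ k 1 b

lemma hom_ext' (N : ℤ) (f g : hocolimGrp A N →+ G)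
    (h1 : ∀ (ℓ : ℕ) (b : A ℓ (N + 1)),
      f (DirectSum.of (fun m : ℕ => A m (N + 1)) ℓ b, 0)
        = g (DirectSum.of (fun m : ℕ => A m (N + 1)) ℓ b, 0))
    (h2 : ∀ (k : ℕ) (a : A k N),
      f (0, DirectSum.of (fun k' : ℕ => A k' N) k a)
        = g (0, DirectSum.of (fun k' : ℕ => A k' N) k a)) : f = g := by
  have e1 : f.comp (AddMonoidHom.inl _ _) = g.comp (AddMonoidHom.inl _ _) :=
    DirectSum.addHom_ext fun ℓ b => by simpa using h1 ℓ b
  have e2 : f.comp (AddMonoidHom.inr _ _) = g.comp (AddMonoidHom.inr _ _) :=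
    DirectSum.addHom_ext fun k a => by simpa using h2 k a
  ext x
  have hx : x = (x.1, 0) + (0, x.2) := by simp
  rw [hx, map_add, map_add]
  have c1 := DFunLike.congr_fun e1 x.1
  have c2 := DFunLike.congr_fun e2 x.2
  simp only [AddMonoidHom.coe_comp, Function.comp_apply, AddMonoidHom.inl_apply,
    AddMonoidHom.inr_apply] at c1 c2
  rw [c1, c2]

lemma pairF_invRaw (N : ℤ) (f : ↥(homSet (hocolimGrp A N) G)) :
    ⇑(pairF η N ⟨invRaw η N f.1, invRaw_mem η N f.1 f.2⟩) = f.1 := by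
  have h : pairF η N ⟨invRaw η N f.1, invRaw_mem η N f.1 f.2⟩
      = AddMonoidHom.mk' f.1 (fun x y => f.2 x y) := by
    apply hom_ext'
    · intro ℓ b
      rw [pairF_of1]
      show (invRaw η N f.1).2 ℓ 1 b = _
      show (∑ j ∈ Finset.range 1, f.1 (DirectSum.of (fun m : ℕ => A m (N + 1)) (ℓ + j)
          (etaComp η (N + 1) ℓ j b), 0)) = _
      rw [Finset.sum_range_one]
      rfl
    · intro k a
      rw [pairF_of2]
      rfl
  rw [h]
  rfl

lemma dHolimDual_mem' (δ : ∀ (ℓ : ℕ) (n : ℤ), A ℓ n →+ A ℓ (n + 1))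
    (hηchain : ∀ (ℓ : ℕ) (n : ℤ) (x : A ℓ n),
      η ℓ (n + 1) (δ ℓ n x) = δ (ℓ + 1) n (η ℓ n x)) (N : ℤ)
    (zz : (∀ ℓ : ℕ, A ℓ (N + 1) → G) × (∀ (ℓ k : ℕ), A ℓ (N + 1 + 1) → G))
    (hz : zz ∈ holimDualSub A η G (N + 1)) :
    dHolimDual A δ η G N zz ∈ holimDualSub A η G N := by
  obtain ⟨h1, h2, h3⟩ := hz
  refine ⟨fun ℓ a b => ?_, fun ℓ k a b => ?_, fun ℓ k l a => ?_⟩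
  · show zz.1 ℓ (δ ℓ N (a + b)) = zz.1 ℓ (δ ℓ N a) + zz.1 ℓ (δ ℓ N b)
    rw [map_add, h1]
  · show zz.2 ℓ k (δ ℓ (N + 1) (a + b)) +
        sgn (N + 1) • (zz.1 (ℓ + k) (etaComp η (N + 1) ℓ k (a + b)) - zz.1 ℓ (a + b)) = _
    rw [map_add, h2, map_add, h1, h1]
    show _ = (zz.2 ℓ k (δ ℓ (N + 1) a) +
        sgn (N + 1) • (zz.1 (ℓ + k) (etaComp η (N + 1) ℓ k a) - zz.1 ℓ a)) +
      (zz.2 ℓ k (δ ℓ (N + 1) b) +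
        sgn (N + 1) • (zz.1 (ℓ + k) (etaComp η (N + 1) ℓ k b) - zz.1 ℓ b))
    rw [smul_sub, smul_sub, smul_sub, smul_add, smul_add]
    abel
  · show (zz.2 ℓ k (δ ℓ (N + 1) a) +
        sgn (N + 1) • (zz.1 (ℓ + k) (etaComp η (N + 1) ℓ k a) - zz.1 ℓ a)) +
      (zz.2 (ℓ + k) l (δ (ℓ + k) (N + 1) (etaComp η (N + 1) ℓ k a)) +
        sgn (N + 1) • (zz.1 (ℓ + k + l)
            (etaComp η (N + 1) (ℓ + k) l (etaComp η (N + 1) ℓ k a)) -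
          zz.1 (ℓ + k) (etaComp η (N + 1) ℓ k a))) =
      zz.2 ℓ (k + l) (δ ℓ (N + 1) a) +
        sgn (N + 1) • (zz.1 (ℓ + (k + l)) (etaComp η (N + 1) ℓ (k + l) a) - zz.1 ℓ a)
    rw [← etaComp_delta' η δ hηchain (N + 1) ℓ k a]
    have hz1 : zz.1 (ℓ + k + l) (etaComp η (N + 1) (ℓ + k) l (etaComp η (N + 1) ℓ k a))
        = zz.1 (ℓ + (k + l)) (etaComp η (N + 1) ℓ (k + l) a) :=
      apply_heq' zz.1 (Nat.add_assoc ℓ k l) (etaComp_assoc' η (N + 1) ℓ k a l)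
    rw [hz1, ← h3 ℓ k l (δ ℓ (N + 1) a)]
    rw [smul_sub, smul_sub, smul_sub]
    abel

lemma intertwine' (δ : ∀ (ℓ : ℕ) (n : ℤ), A ℓ n →+ A ℓ (n + 1)) (N : ℤ)
    (zz : ↥(holimDualSub A η G (N + 1)))
    (hm : dHolimDual A δ η G N zz.1 ∈ holimDualSub A η G N) :
    pairF η N ⟨dHolimDual A δ η G N zz.1, hm⟩ = (pairF η (N + 1) zz).comp (hocolimD A δ η N) := by
  apply hom_ext'
  · intro ℓ b
    rw [pairF_of1]
    have hd : hocolimD A δ η N (DirectSum.of (fun m : ℕ => A m (N + 1)) ℓ b, 0) =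
        (DirectSum.of (fun m : ℕ => A m (N + 1 + 1)) ℓ (δ ℓ (N + 1) b),
         sgn N • (DirectSum.of (fun k : ℕ => A k (N + 1)) ℓ b -
           DirectSum.of (fun k : ℕ => A k (N + 1)) (ℓ + 1) (η ℓ (N + 1) b))) := by
      simp [hocolimD]
    show _ = pairF η (N + 1) zz (hocolimD A δ η N (DirectSum.of (fun m : ℕ => A m (N + 1)) ℓ b, 0))
    rw [hd]
    have expand : pairF η (N + 1) zz
        (DirectSum.of (fun m : ℕ => A m (N + 1 + 1)) ℓ (δ ℓ (N + 1) b),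
         sgn N • (DirectSum.of (fun k : ℕ => A k (N + 1)) ℓ b -
           DirectSum.of (fun k : ℕ => A k (N + 1)) (ℓ + 1) (η ℓ (N + 1) b)))
        = zz.1.2 ℓ 1 (δ ℓ (N + 1) b) +
          sgn N • (zz.1.1 ℓ b - zz.1.1 (ℓ + 1) (η ℓ (N + 1) b)) := by
      simp [pairF]
    rw [expand]
    show zz.1.2 ℓ 1 (δ ℓ (N + 1) b) +
        sgn (N + 1) • (zz.1.1 (ℓ + 1) (etaComp η (N + 1) ℓ 1 b) - zz.1.1 ℓ b) = _
    have heta : etaComp η (N + 1) ℓ 1 b = η ℓ (N + 1) b := rfl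
    rw [heta, sgn_succ', neg_smul, ← smul_neg, neg_sub]
  · intro k a
    rw [pairF_of2]
    have hd : hocolimD A δ η N (0, DirectSum.of (fun k' : ℕ => A k' N) k a) =
        (0, DirectSum.of (fun k' : ℕ => A k' (N + 1)) k (δ k N a)) := by
      simp [hocolimD]
    show _ = pairF η (N + 1) zz (hocolimD A δ η N (0, DirectSum.of (fun k' : ℕ => A k' N) k a))
    rw [hd, pairF_of2]
    rfl

variable [TopologicalSpace G] [IsTopologicalAddGroup G]

noncomputable def pairEquiv (N : ℤ) :
    ↥(holimDualSub A η G N) ≃ ↥(homSet (hocolimGrp A N) G) where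
  toFun zz := ⟨⇑(pairF η N zz), fun x y => map_add _ x y⟩
  invFun f := ⟨invRaw η N f.1, invRaw_mem η N f.1 f.2⟩
  left_inv zz := Subtype.ext (invRaw_pairF η N zz)
  right_inv f := Subtype.ext (pairF_invRaw η N f)

noncomputable def pairHomeo (N : ℤ) :
    ↥(holimDualSub A η G N) ≃ₜ ↥(homSet (hocolimGrp A N) G) where
  toEquiv := pairEquiv η N
  continuous_toFun := by
    classical
    apply Continuous.subtype_mk
    apply continuous_pi
    intro x
    show Continuous fun zz : ↥(holimDualSub A η G N) => pairF η N zz x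
    have hrw : (fun zz : ↥(holimDualSub A η G N) => pairF η N zz x)
        = fun zz => (∑ i ∈ DFinsupp.support x.1, zz.1.2 i 1 (x.1 i)) +
          ∑ i ∈ DFinsupp.support x.2, zz.1.1 i (x.2 i) :=
      funext fun zz => pairF_apply η N zz x
    rw [hrw]
    refine Continuous.add (continuous_finset_sum _ fun i _ => ?_)
      (continuous_finset_sum _ fun i _ => ?_)
    · exact (continuous_apply _).comp ((continuous_apply (1 : ℕ)).comp
        ((continuous_apply i).comp (continuous_snd.comp continuous_subtype_val)))
    · exact (continuous_apply _).comp ((continuous_apply i).comp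
        (continuous_fst.comp continuous_subtype_val))
  continuous_invFun := by
    apply Continuous.subtype_mk
    refine Continuous.prodMk ?_ ?_
    · exact continuous_pi fun k => continuous_pi fun a =>
        (continuous_apply _).comp continuous_subtype_val
    · exact continuous_pi fun ℓ => continuous_pi fun k => continuous_pi fun b =>
        continuous_finset_sum _ fun j _ =>
          (continuous_apply _).comp continuous_subtype_val

end Aux

theorem holim_of_dual_tower_is_dual_of_hocolim
    {G : Type*} [AddCommGroup G] [TopologicalSpace G] [IsTopologicalAddGroup G]
    [PolishSpace G]
    (hdcp : ∀ k : ℕ, 0 < k → IsClosed {g : G | ∃ x : G, k • x = g})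
    (A : ℕ → ℤ → Type*) [∀ ℓ n, AddCommGroup (A ℓ n)]
    [∀ ℓ n, Module.Free ℤ (A ℓ n)] [∀ ℓ n, Module.Finite ℤ (A ℓ n)]
    (δ : ∀ (ℓ : ℕ) (n : ℤ), A ℓ n →+ A ℓ (n + 1))
    (hδδ : ∀ (ℓ : ℕ) (n : ℤ) (x : A ℓ n), δ ℓ (n + 1) (δ ℓ n x) = 0)
    (η : ∀ (ℓ : ℕ) (n : ℤ), A ℓ n →+ A (ℓ + 1) n)
    (hηchain : ∀ (ℓ : ℕ) (n : ℤ) (x : A ℓ n),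
      η ℓ (n + 1) (δ ℓ n x) = δ (ℓ + 1) n (η ℓ n x)) :
    -- the differential of holim 𝐀* preserves the holim subgroups
    (∀ (N : ℤ) (zz : (∀ ℓ : ℕ, A ℓ (N + 1) → G) × (∀ (ℓ k : ℕ), A ℓ (N + 1 + 1) → G)),
      zz ∈ holimDualSub A η G (N + 1) → dHolimDual A δ η G N zz ∈ holimDualSub A η G N) ∧
    -- the pairing gives degreewise topological group isomorphisms, intertwining the
    -- differential of holim 𝐀* with the dual of the codifferential of hocolim 𝐀
    ∃ e : ∀ N : ℤ, ↥(holimDualSub A η G N) ≃ₜ ↥(homSet (hocolimGrp A N) G),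
      (∀ (N : ℤ) (x y : ↥(holimDualSub A η G N)), e N (x + y) = e N x + e N y) ∧
      -- ⟨z, b e_{ℓ,ℓ+1}⟩ = z_{ℓ,ℓ+1}(b)
      (∀ (N : ℤ) (zz : ↥(holimDualSub A η G N)) (ℓ : ℕ) (b : A ℓ (N + 1)),
        (e N zz).1 (DirectSum.of (fun m : ℕ => A m (N + 1)) ℓ b, 0) = zz.1.2 ℓ 1 b) ∧
      -- ⟨z, a e_ℓ⟩ = z_ℓ(a)
      (∀ (N : ℤ) (zz : ↥(holimDualSub A η G N)) (k : ℕ) (a : A k N),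
        (e N zz).1 (0, DirectSum.of (fun k' : ℕ => A k' N) k a) = zz.1.1 k a) ∧
      -- intertwining of the differentials
      (∀ (N : ℤ) (zz : ↥(holimDualSub A η G (N + 1)))
        (hm : dHolimDual A δ η G N zz.1 ∈ holimDualSub A η G N),
        ((e N ⟨dHolimDual A δ η G N zz.1, hm⟩ : ↥(homSet (hocolimGrp A N) G)) :
            hocolimGrp A N → G) =
          fun x => (e (N + 1) zz).1 (hocolimD A δ η N x)) := by
    classical
  refine ⟨fun N zz hz => dHolimDual_mem' η δ hηchain N zz hz,
    fun N => pairHomeo η N, ?_, ?_, ?_, ?_⟩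
  · intro N x y
    refine Subtype.ext (funext fun p => ?_)
    show pairF η N (x + y) p = pairF η N x p + pairF η N y p
    rw [pairF_apply, pairF_apply, pairF_apply]
    have e1 : (∑ i ∈ DFinsupp.support p.1,
          ((x + y : ↥(holimDualSub A η G N))).1.2 i 1 (p.1 i))
        = ∑ i ∈ DFinsupp.support p.1, (x.1.2 i 1 (p.1 i) + y.1.2 i 1 (p.1 i)) := rfl
    have e2 : (∑ i ∈ DFinsupp.support p.2,
          ((x + y : ↥(holimDualSub A η G N))).1.1 i (p.2 i))
        = ∑ i ∈ DFinsupp.support p.2, (x.1.1 i (p.2 i) + y.1.1 i (p.2 i)) := rfl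
    rw [e1, e2, Finset.sum_add_distrib, Finset.sum_add_distrib]
    abel
  · intro N zz ℓ b
    exact pairF_of1 η N zz ℓ b
  · intro N zz k a
    exact pairF_of2 η N zz k a
  · intro N zz hm
    funext x
    exact DFunLike.congr_fun (intertwine' η δ N zz hm) x
end

section
/- Let 𝐀 = (A^(k), p^(k,k+1))_{k∈ω} be a tower of proper Polish cochain complexes that is split epimorphic, i.e., for every k and n the continuous homomorphism (p^(k,k+1))^n : (A^(k+1))^n → (A^(k))^n admits a continuous group-homomorphism right inverse. Let lim 𝐀 be the Polish cochain complex with (lim 𝐀)^n the inverse limit of the groups (A^(k))^n, with the induced codifferentials, and let Local : H^n(lim 𝐀) → ∏_{k∈ω} H^n(A^(k)) send the class of a cocycle z = (z_k)_k to ([z_k])_k. Then for every n ∈ ℤ: (i) the image of Local equals the inverse limit lim_k H^n(A^(k)); and (ii) the kernel of Local equals H^n_∞(lim 𝐀), i.e., for a cocycle z, Local([z]) = 0 if and only if z lies in the closure of B^n(lim 𝐀) in (lim 𝐀)^n. -/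
/-- Iterated application of the bonding-type maps `q`, stripping from the top:
`st14DA q k j x = q k (q (k+1) (... (q (k+j-1) x)))`. -/
def st14DA {C : ℕ → Type*} (q : ∀ l, C (l + 1) → C l) : ∀ (k j : ℕ), C (k + j) → C k
  | _, 0, x => x
  | k, j + 1, x => st14DA q k j (q (k + j) x)

lemma st14_castT {C : ℕ → Type*} (T : ∀ l, C l) {a b : ℕ} (h : a = b) :
    cast (congrArg C h) (T a) = T b := by subst h; rw [cast_eq]

lemma st14_castQ {C : ℕ → Type*} (q : ∀ l, C (l + 1) → C l) {a b : ℕ} (h : a = b)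
    (h2 : a + 1 = b + 1) (x : C (a + 1)) :
    cast (congrArg C h) (q a x) = q b (cast (congrArg C h2) x) := by
  subst h; rw [cast_eq, cast_eq]

lemma st14DA_bot {C : ℕ → Type*} (q : ∀ l, C (l + 1) → C l) :
    ∀ (j k : ℕ) (x : C ((k + 1) + j)),
      q k (st14DA q (k + 1) j x) = st14DA q k (j + 1) (cast (congrArg C (Nat.succ_add k j)) x) := by
  intro j
  induction j with
  | zero =>
    intro k x
    exact congrArg (q k) (cast_eq _ x).symm
  | succ j ih =>
    intro k x
    calc q k (st14DA q (k + 1) (j + 1) x)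
        = q k (st14DA q (k + 1) j (q ((k + 1) + j) x)) := rfl
      _ = st14DA q k (j + 1) (cast (congrArg C (Nat.succ_add k j)) (q ((k + 1) + j) x)) := ih k _
      _ = st14DA q k (j + 1) (q ((k + j) + 1) (cast (congrArg C (Nat.succ_add k (j + 1))) x)) := by
          rw [st14_castQ q (Nat.succ_add k j) (Nat.succ_add k (j + 1)) x]
      _ = st14DA q k ((j + 1) + 1) (cast (congrArg C (Nat.succ_add k (j + 1))) x) := rfl

lemma st14DA_comm {C D : ℕ → Type*} (q : ∀ l, C (l + 1) → C l) (q' : ∀ l, D (l + 1) → D l)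
    (f : ∀ l, C l → D l) (hf : ∀ l x, f l (q l x) = q' l (f (l + 1) x)) (k : ℕ) :
    ∀ (j : ℕ) (x : C (k + j)), f k (st14DA q k j x) = st14DA q' k j (f (k + j) x) := by
  intro j
  induction j with
  | zero => intro x; rfl
  | succ j ih =>
    intro x
    calc f k (st14DA q k (j + 1) x)
        = f k (st14DA q k j (q (k + j) x)) := rfl
      _ = st14DA q' k j (f (k + j) (q (k + j) x)) := ih _
      _ = st14DA q' k j (q' (k + j) (f ((k + j) + 1) x)) := by rw [hf]
      _ = st14DA q' k (j + 1) (f (k + (j + 1)) x) := rfl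

lemma st14DA_fam {C : ℕ → Type*} (q : ∀ l, C (l + 1) → C l) (T : ∀ l, C l)
    (hT : ∀ l, q l (T (l + 1)) = T l) (k : ℕ) :
    ∀ j : ℕ, st14DA q k j (T (k + j)) = T k := by
  intro j
  induction j with
  | zero => rfl
  | succ j ih =>
    calc st14DA q k (j + 1) (T (k + (j + 1)))
        = st14DA q k j (q (k + j) (T ((k + j) + 1))) := rfl
      _ = st14DA q k j (T (k + j)) := by rw [hT (k + j)]
      _ = T k := ih

lemma st14DA_strip {C : ℕ → Type*} (q : ∀ l, C (l + 1) → C l) (T : ∀ l, C l) (N : ℕ)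
    (hT : ∀ l, N ≤ l → q l (T (l + 1)) = T l) (k : ℕ) :
    ∀ (e j : ℕ), j ≤ e → N ≤ k + j → st14DA q k e (T (k + e)) = st14DA q k j (T (k + j)) := by
  intro e
  induction e with
  | zero => intro j hj _; obtain rfl : j = 0 := Nat.le_zero.mp hj; rfl
  | succ e ih =>
    intro j hj hN
    rcases Nat.eq_or_lt_of_le hj with rfl | hlt
    · rfl
    · have hj' : j ≤ e := by omega
      calc st14DA q k (e + 1) (T (k + (e + 1)))
          = st14DA q k e (q (k + e) (T ((k + e) + 1))) := rfl
        _ = st14DA q k e (T (k + e)) := by rw [hT (k + e) (by omega)]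
        _ = st14DA q k j (T (k + j)) := ih j hj' hN

/-- The family obtained by placing `v` at index `K` and extending upward by `s`
(junk `0` below `K`). -/
def st14T {C : ℕ → Type*} [∀ l, Zero (C l)] (s : ∀ l, C l → C (l + 1)) (K : ℕ) (v : C K) :
    ∀ l, C l
  | 0 => if h : 0 = K then cast (congrArg C h.symm) v else 0
  | l + 1 => if h : l + 1 = K then cast (congrArg C h.symm) v else s l (st14T s K v l)

lemma st14T_at {C : ℕ → Type*} [∀ l, Zero (C l)] (s : ∀ l, C l → C (l + 1)) (K : ℕ) (v : C K) :
    st14T s K v K = v := by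
  have h : ∀ (l : ℕ) (h : l = K), st14T s K v l = cast (congrArg C h.symm) v := by
    intro l h
    cases l with
    | zero => exact dif_pos h
    | succ l => exact dif_pos h
  rw [h K rfl]; exact cast_eq _ v

lemma st14T_succ {C : ℕ → Type*} [∀ l, Zero (C l)] (s : ∀ l, C l → C (l + 1)) (K : ℕ) (v : C K)
    (l : ℕ) (hl : K ≤ l) : st14T s K v (l + 1) = s l (st14T s K v l) :=
  dif_neg (by omega)

lemma st14_compatAux {C : ℕ → Type*} (q : ∀ l, C (l + 1) → C l) (T : ∀ l, C l) (N : ℕ)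
    (hTc : ∀ l, N ≤ l → q l (T (l + 1)) = T l) (k : ℕ) :
    q k (st14DA q (k + 1) N (T ((k + 1) + N))) = st14DA q k N (T (k + N)) := by
  rw [st14DA_bot q N k (T ((k + 1) + N)), st14_castT T (Nat.succ_add k N)]
  show st14DA q k N (q (k + N) (T ((k + N) + 1))) = st14DA q k N (T (k + N))
  rw [hTc (k + N) (Nat.le_add_left N k)]

lemma st14_valueAux {C D : ℕ → Type*} (q : ∀ l, C (l + 1) → C l) (q' : ∀ l, D (l + 1) → D l)
    (f : ∀ l, C l → D l) (hfq : ∀ l x, f l (q l x) = q' l (f (l + 1) x))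
    (T : ∀ l, C l) (z : ∀ l, D l) (hz : ∀ l, q' l (z (l + 1)) = z l)
    (k i : ℕ) (hTc : ∀ l, k + i ≤ l → q l (T (l + 1)) = T l)
    (hTv : f (k + i) (T (k + i)) = z (k + i)) :
    f k (st14DA q k (k + i) (T (k + (k + i)))) = z k := by
  rw [st14DA_strip q T (k + i) hTc k (k + i) i (Nat.le_add_left i k) le_rfl,
      st14DA_comm q q' f hfq k i, hTv]
  exact st14DA_fam q' z hz k i

theorem local_image_and_kernel_for_lim_of_split_epimorphic_tower
    (A : ℕ → ℤ → Type*)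
    [∀ k n, AddCommGroup (A k n)] [∀ k n, TopologicalSpace (A k n)]
    [∀ k n, IsTopologicalAddGroup (A k n)] [∀ k n, PolishSpace (A k n)]
    (δ : ∀ (k : ℕ) (n : ℤ), A k n →+ A k (n + 1))
    (hδc : ∀ k n, Continuous (δ k n))
    (hδδ : ∀ (k : ℕ) (n : ℤ) (x : A k n), δ k (n + 1) (δ k n x) = 0)
    -- properness
    (hproper : ∀ (k : ℕ) (n : ℤ), IsClosed ((δ k n).range : Set (A k (n + 1))))
    -- bonding cochain maps
    (p : ∀ (k : ℕ) (n : ℤ), A (k + 1) n →+ A k n)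
    (hpc : ∀ k n, Continuous (p k n))
    (hpchain : ∀ (k : ℕ) (n : ℤ) (x : A (k + 1) n), p k (n + 1) (δ (k + 1) n x) = δ k n (p k n x))
    -- split epimorphic: each bonding map admits a continuous additive right inverse
    (hsplit : ∀ (k : ℕ) (n : ℤ), ∃ s : A k n →+ A (k + 1) n,
      Continuous s ∧ ∀ x, p k n (s x) = x) :
    ∀ m : ℤ,
      -- (i) the image of Local is the inverse limit lim_k H^{m+1}(A^(k)):
      -- (⊆) classes of the components of a compatible cocycle form a compatible family
      ((∀ z : ∀ k, A k (m + 1),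
          (∀ k, p k (m + 1) (z (k + 1)) = z k) → (∀ k, δ k (m + 1) (z k) = 0) →
            ∀ k, ∃ w : A k m, p k (m + 1) (z (k + 1)) - z k = δ k m w) ∧
        -- (⊇) every compatible family of classes is realized by a compatible cocycle
        (∀ h : ∀ k, A k (m + 1),
          (∀ k, δ k (m + 1) (h k) = 0) →
          (∀ k, ∃ w : A k m, p k (m + 1) (h (k + 1)) - h k = δ k m w) →
          ∃ z : ∀ k, A k (m + 1),
            (∀ k, p k (m + 1) (z (k + 1)) = z k) ∧ (∀ k, δ k (m + 1) (z k) = 0) ∧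
            ∀ k, ∃ w : A k m, z k - h k = δ k m w)) ∧
      -- (ii) the kernel of Local is the closure of the coboundaries modulo coboundaries
      (∀ z : ∀ k, A k (m + 1),
        (∀ k, p k (m + 1) (z (k + 1)) = z k) → (∀ k, δ k (m + 1) (z k) = 0) →
        ((∀ k, ∃ w : A k m, z k = δ k m w) ↔
          z ∈ closure {y : ∀ k, A k (m + 1) |
            ∃ w : ∀ k, A k m, (∀ k, p k m (w (k + 1)) = w k) ∧
              y = fun k => δ k m (w k)})) := by
  choose S hSc hSs using hsplit
  intro m
  refine ⟨⟨?_, ?_⟩, ?_⟩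
  · -- (i) ⊆ : trivial, the difference of a compatible family is 0 = δ 0
    intro z hz _ k
    exact ⟨0, by rw [hz k, sub_self, map_zero]⟩
  · -- (i) ⊇ : realization of a compatible family of classes
    intro h hcoc hcomp
    choose W hW using hcomp
    let g : ∀ k, A k (m + 1) × A k m := fun k =>
      Nat.rec (motive := fun k => A k (m + 1) × A k m) (h 0, 0)
        (fun k ih => (h (k + 1) + δ (k + 1) m (S k m (ih.2 - W k)), S k m (ih.2 - W k))) k
    have hgs : ∀ k, g (k + 1) =
        (h (k + 1) + δ (k + 1) m (S k m ((g k).2 - W k)), S k m ((g k).2 - W k)) :=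
      fun k => rfl
    have hInv : ∀ k, (g k).1 - h k = δ k m (g k).2 := by
      intro k
      cases k with
      | zero =>
        show h 0 - h 0 = δ 0 m (0 : A 0 m)
        rw [sub_self, map_zero]
      | succ k =>
        rw [hgs k]
        show h (k + 1) + δ (k + 1) m (S k m ((g k).2 - W k)) - h (k + 1)
            = δ (k + 1) m (S k m ((g k).2 - W k))
        rw [add_sub_cancel_left]
    refine ⟨fun k => (g k).1, fun k => ?_, fun k => ?_, fun k => ⟨(g k).2, hInv k⟩⟩
    · show p k (m + 1) ((g (k + 1)).1) = (g k).1
      rw [hgs k]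
      show p k (m + 1) (h (k + 1) + δ (k + 1) m (S k m ((g k).2 - W k))) = (g k).1
      have e1 : p k (m + 1) (h (k + 1)) = δ k m (W k) + h k :=
        sub_eq_iff_eq_add.mp (hW k)
      rw [map_add, hpchain k m, hSs k m, map_sub, e1, ← hInv k]
      abel
    · cases k with
      | zero => exact hcoc 0
      | succ k =>
        show δ (k + 1) (m + 1) ((g (k + 1)).1) = 0
        rw [hgs k]
        show δ (k + 1) (m + 1) (h (k + 1) + δ (k + 1) m (S k m ((g k).2 - W k))) = 0
        rw [map_add, hcoc (k + 1), hδδ (k + 1) m, zero_add]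
  · -- (ii) kernel of Local
    intro z hcomp hcoc
    constructor
    · -- each component a coboundary → z in the closure of compatible coboundaries
      intro hcb
      choose V hV using hcb
      have key : ∀ K : ℕ, ∃ w : ∀ k, A k m,
          (∀ k, p k m (w (k + 1)) = w k) ∧ ∀ k, k ≤ K → δ k m (w k) = z k := by
        intro K
        have hTc : ∀ l, K ≤ l →
            p l m (st14T (fun l x => S l m x) K (V K) (l + 1))
              = st14T (fun l x => S l m x) K (V K) l := by
          intro l hl
          rw [st14T_succ (fun l x => S l m x) K (V K) l hl]
          exact hSs l m _
        refine ⟨fun k => st14DA (fun l (x : A (l + 1) m) => p l m x) k K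
            (st14T (fun l x => S l m x) K (V K) (k + K)), fun k => ?_, fun k hk => ?_⟩
        · exact st14_compatAux (fun l (x : A (l + 1) m) => p l m x)
            (st14T (fun l x => S l m x) K (V K)) K hTc k
        · obtain ⟨i, rfl⟩ := Nat.exists_eq_add_of_le hk
          exact st14_valueAux (fun l (x : A (l + 1) m) => p l m x)
            (fun l (x : A (l + 1) (m + 1)) => p l (m + 1) x)
            (fun l (x : A l m) => δ l m x)
            (fun l x => (hpchain l m x).symm)
            (st14T (fun l x => S l m x) (k + i) (V (k + i))) z hcomp k i hTc
            (by rw [st14T_at]; exact (hV (k + i)).symm)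
      choose w hwc hwv using key
      have htd : Filter.Tendsto (fun K : ℕ => fun k => δ k m (w K k)) Filter.atTop (nhds z) := by
        refine tendsto_pi_nhds.mpr fun k => ?_
        refine Filter.Tendsto.congr' ?_ tendsto_const_nhds
        exact Filter.eventually_atTop.mpr ⟨k, fun K hK => (hwv K k hK).symm⟩
      exact mem_closure_of_tendsto htd
        (Filter.Eventually.of_forall fun K => ⟨w K, hwc K, rfl⟩)
    · -- z in the closure → each component a coboundary (uses properness)
      intro hcl k
      have hsub : {y : ∀ k, A k (m + 1) |
            ∃ w : ∀ k, A k m, (∀ k, p k m (w (k + 1)) = w k) ∧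
              y = fun k => δ k m (w k)} ⊆
          (fun y : ∀ k, A k (m + 1) => y k) ⁻¹' ((δ k m).range : Set (A k (m + 1))) := by
        rintro y ⟨w, -, rfl⟩
        exact ⟨w k, rfl⟩
      have hc2 : IsClosed ((fun y : ∀ k, A k (m + 1) => y k) ⁻¹'
          ((δ k m).range : Set (A k (m + 1)))) :=
        (hproper k m).preimage (continuous_apply k)
      obtain ⟨w, hw⟩ := closure_minimal hsub hc2 hcl
      exact ⟨w, hw.symm⟩
end
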